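/- Let G be a transitive permutation group on a finite set X containing an abelian semiregular subgroup H with m orbits, let Γ be a G-invariant digraph with symbol 𝕊 = (S_{ij}) relative to H, let λ be an eigenvalue of Γ, and let K_λ be the kernel of the G-action on the λ-eigenspace W_λ. Then K_λ ∩ H = ⟨K_{𝕊,λ}⟩^⊥, where K_{𝕊,λ} = {χ ∈ H* : det(χ(𝕊) − λI_m) = 0} and ⟨K_{𝕊,λ}⟩^⊥ = ∩_{χ ∈ ⟨K_{𝕊,λ}⟩} Ker χ. -/

import Mathlib

open MulAction
open scoped Classical

/-- The symbol matrix `χ(𝕊)`. -/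
private noncomputable def mcMat {G : Type*} [Group G] (H : Subgroup G) {m : ℕ}
    [Fintype H] (S : Fin m → Fin m → Set H) (χ : H →* ℂˣ) : Matrix (Fin m) (Fin m) ℂ :=
  Matrix.of fun i j : Fin m => ∑ h : H, if h ∈ S i j then ((χ h : ℂˣ) : ℂ) else 0

/-- `K_λ ∩ H = ⟨K_{𝕊,λ}⟩^⊥`:  an element `h` of the abelian semiregular subgroup `H`
lies in the kernel of the `G`-action on the `λ`-eigenspace of a `G`-invariant digraph
with symbol `𝕊` iff `χ(h) = 1` for every character `χ` in the subgroup generated by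
`K_{𝕊,λ} = {χ : det(χ(𝕊) − λI) = 0}`. -/
theorem stmt14 {G X : Type*} [Group G] [Fintype X] [MulAction G X]
    (htrans : ∀ x y : X, ∃ g : G, g • x = y)
    (H : Subgroup G) [Fintype H]
    (habel : ∀ a b : H, a * b = b * a)
    (hsemi : ∀ (h : H) (x : X), (h : G) • x = x → h = 1)
    {m : ℕ} (x : Fin m → X)
    (horb : ∀ y : X, ∃ i, y ∈ orbit H (x i))
    (hdisj : ∀ i j, i ≠ j → orbit H (x i) ≠ orbit H (x j))
    (R : X → X → Prop)
    (hinv : ∀ (g : G) (a b : X), R (g • a) (g • b) ↔ R a b)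
    (A : Matrix X X ℂ) (hA : ∀ a b, A a b = if R a b then 1 else 0)
    (S : Fin m → Fin m → Set H)
    (hS : ∀ i j, S i j = {h : H | R (x i) ((h : G) • x j)})
    (lam : ℂ) (hlam : ∃ w : X → ℂ, w ≠ 0 ∧ A.mulVec w = lam • w)
    (Kchar : Set (H →* ℂˣ))
    (hK : Kchar = {χ : H →* ℂˣ | Matrix.det
        ((Matrix.of fun i j : Fin m => ∑ h : H, if h ∈ S i j then ((χ h : ℂˣ) : ℂ) else 0)
          - lam • (1 : Matrix (Fin m) (Fin m) ℂ)) = 0}) :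
    ∀ h : H,
      (∀ w : X → ℂ, A.mulVec w = lam • w → ∀ y : X, w ((h : G) • y) = w y)
        ↔ (∀ χ ∈ Subgroup.closure Kchar, χ h = 1) := by
  classical
  have hKiff : ∀ χ : H →* ℂˣ,
      χ ∈ Kchar ↔ (mcMat H S χ - lam • (1 : Matrix (Fin m) (Fin m) ℂ)).det = 0 := by
    intro χ; rw [hK]; exact Iff.rfl
  -- decoding of points of `X` as pairs (orbit index, group element)
  have key : ∀ (i j : Fin m) (k k' : H), (k : G) • x i = (k' : G) • x j → i = j ∧ k = k' := by
    intro i j k k' hkk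
    have hij : i = j := by
      by_contra hne
      apply hdisj i j hne
      have hxj : x j ∈ orbit H (x i) := by
        refine MulAction.mem_orbit_iff.mpr ⟨k'⁻¹ * k, ?_⟩
        rw [Submonoid.smul_def, Subgroup.coe_mul, mul_smul, hkk, ← mul_smul]
        simp
      exact (MulAction.orbit_eq_iff.mpr hxj).symm
    subst hij
    refine ⟨rfl, ?_⟩
    have h1 : ((k'⁻¹ * k : H) : G) • x i = x i := by
      rw [Subgroup.coe_mul, mul_smul, hkk, ← mul_smul]
      simp
    have h2 := hsemi (k'⁻¹ * k) (x i) h1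
    rw [inv_mul_eq_one] at h2
    exact h2.symm
  have hex : ∀ y : X, ∃ p : Fin m × H, ((p.2 : G) • x p.1) = y := by
    intro y
    obtain ⟨i, hi⟩ := horb y
    obtain ⟨k, hk⟩ := MulAction.mem_orbit_iff.mp hi
    exact ⟨(i, k), hk⟩
  choose dec hdec using hex
  have hdec' : ∀ (y : X) (i : Fin m) (k : H), (k : G) • x i = y → dec y = (i, k) := by
    intro y i k hk
    obtain ⟨h1, h2⟩ := key (dec y).1 i (dec y).2 k (by rw [hdec y, hk])
    exact Prod.ext h1 h2
  have hdecx : ∀ (i : Fin m) (k : H), dec ((k : G) • x i) = (i, k) := fun i k => hdec' _ i k rfl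
  have hdecsmul : ∀ (k : H) (y : X), dec ((k : G) • y) = ((dec y).1, k * (dec y).2) := by
    intro k y
    refine hdec' _ _ _ ?_
    rw [Subgroup.coe_mul, mul_smul, hdec y]
  have hdec1 : ∀ i, dec (x i) = (i, 1) := by
    intro i
    refine hdec' _ _ _ ?_
    simp
  let e : (Fin m × H) ≃ X :=
    ⟨fun p => (p.2 : G) • x p.1, dec, fun p => by rw [hdecx], hdec⟩
  -- A is H-equivariant
  have hAeq : ∀ (k : G) (a b : X), A (k • a) (k • b) = A a b := by
    intro k a b; rw [hA, hA]; simp [hinv]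
  have lemE : ∀ (v : X → ℂ) (k : G) (z : X),
      (A.mulVec fun t => v (k • t)) z = A.mulVec v (k • z) := by
    intro v k z
    show ∑ t, A z t * v (k • t) = ∑ t, A (k • z) t * v t
    rw [← Equiv.sum_comp (MulAction.toPerm k) (fun t => A (k • z) t * v t)]
    refine Finset.sum_congr rfl fun t _ => ?_
    simp only [MulAction.toPerm_apply]
    rw [hAeq]
  -- pointwise formula at base points for equivariant vectors
  have lemF : ∀ (χ : H →* ℂˣ) (v : X → ℂ),
      (∀ (k : H) (y : X), v ((k : G) • y) = (χ k : ℂ) * v y) →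
      ∀ i, A.mulVec v (x i) = (mcMat H S χ).mulVec (fun j => v (x j)) i := by
    intro χ v hv i
    show ∑ z, A (x i) z * v z = ∑ j, mcMat H S χ i j * v (x j)
    rw [← Equiv.sum_comp e (fun z => A (x i) z * v z), Fintype.sum_prod_type]
    refine Finset.sum_congr rfl fun j _ => ?_
    show ∑ k : H, A (x i) ((k : G) • x j) * v ((k : G) • x j) = _
    rw [mcMat, Matrix.of_apply, Finset.sum_mul]
    refine Finset.sum_congr rfl fun k _ => ?_
    rw [hv k (x j), hA]
    have hR : R (x i) ((k : G) • x j) ↔ k ∈ S i j := by rw [hS]; exact Iff.rfl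
    by_cases hk : k ∈ S i j
    · rw [if_pos (hR.mpr hk), if_pos hk]; ring
    · rw [if_neg (fun hc => hk (hR.mp hc)), if_neg hk, zero_mul, zero_mul]
  -- equivariant vectors are determined by their values at base points
  have lemG : ∀ (χ : H →* ℂˣ) (v : X → ℂ),
      (∀ (k : H) (y : X), v ((k : G) • y) = (χ k : ℂ) * v y) →
      ∀ y, v y = (χ (dec y).2 : ℂ) * v (x (dec y).1) := by
    intro χ v hv y
    conv_lhs => rw [← hdec y]
    rw [hv]
  -- equivariant vectors whose base values give an eigenvector of the symbol matrix are
  -- eigenvectors of A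
  have lemH : ∀ (χ : H →* ℂˣ) (v : X → ℂ),
      (∀ (k : H) (y : X), v ((k : G) • y) = (χ k : ℂ) * v y) →
      (mcMat H S χ).mulVec (fun j => v (x j)) = lam • (fun j => v (x j)) →
      A.mulVec v = lam • v := by
    intro χ v hv hc
    have hAv : ∀ (k : H) (z : X), A.mulVec v ((k : G) • z) = (χ k : ℂ) * A.mulVec v z := by
      intro k z
      rw [← lemE v (k : G) z]
      show ∑ t, A z t * v ((k : G) • t) = (χ k : ℂ) * ∑ t, A z t * v t
      rw [Finset.mul_sum]
      refine Finset.sum_congr rfl fun t _ => ?_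
      rw [hv k t]; ring
    funext y
    have h1 : A.mulVec v y = (χ (dec y).2 : ℂ) * A.mulVec v (x (dec y).1) :=
      lemG χ (A.mulVec v) hAv y
    rw [h1, lemF χ v hv, hc]
    show (χ (dec y).2 : ℂ) * (lam * v (x (dec y).1)) = lam * v y
    rw [lemG χ v hv y]; ring
  intro h
  constructor
  · -- kernel direction: elements acting trivially on the eigenspace are in the annihilator
    intro hker
    have hbase : ∀ χ ∈ Kchar, χ h = 1 := by
      intro χ hχ
      obtain ⟨c, hc0, hc⟩ := Matrix.exists_mulVec_eq_zero_iff.mpr ((hKiff χ).mp hχ)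
      have hceig : (mcMat H S χ).mulVec c = lam • c := by
        rw [Matrix.sub_mulVec, Matrix.smul_mulVec, Matrix.one_mulVec, sub_eq_zero] at hc
        exact hc
      set v : X → ℂ := fun y => (χ (dec y).2 : ℂ) * c (dec y).1 with hvdef
      have hv : ∀ (k : H) (y : X), v ((k : G) • y) = (χ k : ℂ) * v y := by
        intro k y
        simp only [hvdef, hdecsmul k y, map_mul, Units.val_mul]
        ring
      have hvx : (fun j => v (x j)) = c := by
        funext j
        simp only [hvdef, hdec1 j, map_one, Units.val_one, one_mul]
      have heig : A.mulVec v = lam • v := lemH χ v hv (by rw [hvx]; exact hceig)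
      obtain ⟨i, hi⟩ := Function.ne_iff.mp hc0
      have hvi := hker v heig (x i)
      rw [hv h (x i)] at hvi
      have hci : v (x i) = c i := congrFun hvx i
      rw [hci] at hvi
      have : (χ h : ℂ) = 1 := by
        have := mul_right_cancel₀ hi (by rw [hvi, one_mul] : (χ h : ℂ) * c i = 1 * c i)
        exact this
      exact Units.val_eq_one.mp this
    intro χ hχ
    induction hχ using Subgroup.closure_induction with
    | mem χ' hχ' => exact hbase χ' hχ'
    | one => rfl
    | mul a b _ _ ha hb => rw [MonoidHom.mul_apply, ha, hb, mul_one]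
    | inv a _ ha => rw [MonoidHom.inv_apply, ha, inv_one]
  · -- annihilator direction
    intro hcl w hw y
    letI : CommGroup H := { (Subgroup.toGroup H) with mul_comm := habel }
    haveI : NeZero ((Monoid.exponent H : ℂ)) :=
      ⟨by exact_mod_cast Monoid.exponent_ne_zero_of_finite⟩
    haveI hfinchar : Finite (H →* ℂˣ) := by
      obtain ⟨eqv⟩ := CommGroup.monoidHom_mulEquiv_of_hasEnoughRootsOfUnity H ℂ
      exact Finite.of_equiv H eqv.symm.toEquiv
    haveI : Fintype (H →* ℂˣ) := Fintype.ofFinite _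
    haveI : Nonempty (H →* ℂˣ) := ⟨1⟩
    -- orthogonality
    have orth : ∀ k : H, k ≠ 1 → ∑ χ : H →* ℂˣ, ((χ k : ℂˣ) : ℂ) = 0 := by
      intro k hk
      obtain ⟨χ0, hχ0⟩ :=
        CommGroup.exists_apply_ne_one_of_hasEnoughRootsOfUnity (G := H) (M := ℂ) hk
      have hshift : ((χ0 k : ℂˣ) : ℂ) * ∑ χ : H →* ℂˣ, ((χ k : ℂˣ) : ℂ)
          = ∑ χ : H →* ℂˣ, ((χ k : ℂˣ) : ℂ) := by
        rw [Finset.mul_sum]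
        exact Fintype.sum_bijective (fun χ => χ0 * χ) (Group.mulLeft_bijective χ0) _ _
          (fun χ => by rw [MonoidHom.mul_apply, Units.val_mul])
      have h1 : ((χ0 k : ℂˣ) : ℂ) ≠ 1 := fun hh => hχ0 (Units.val_eq_one.mp hh)
      have h2 : (((χ0 k : ℂˣ) : ℂ) - 1) * ∑ χ : H →* ℂˣ, ((χ k : ℂˣ) : ℂ) = 0 := by
        rw [sub_mul, one_mul, hshift, sub_self]
      rcases mul_eq_zero.mp h2 with h3 | h3
      · exact absurd (by linear_combination h3) h1
      · exact h3
    -- the character components of w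
    set F : (H →* ℂˣ) → X → ℂ :=
      fun χ z => ∑ k : H, ((χ k⁻¹ : ℂˣ) : ℂ) * w ((k : G) • z) with hF
    have sumF : ∀ z : X, ∑ χ : H →* ℂˣ, F χ z = (Fintype.card (H →* ℂˣ) : ℂ) * w z := by
      intro z
      rw [hF]
      rw [Finset.sum_comm]
      simp_rw [← Finset.sum_mul]
      rw [Finset.sum_eq_single (1 : H)]
      · simp [Finset.card_univ]
      · intro k _ hk
        rw [orth k⁻¹ (by simpa using hk), zero_mul]
      · simp
    have hFequi : ∀ (χ : H →* ℂˣ) (k0 : H) (z : X),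
        F χ ((k0 : G) • z) = (χ k0 : ℂ) * F χ z := by
      intro χ k0 z
      rw [hF, Finset.mul_sum]
      refine Fintype.sum_equiv (Equiv.mulRight k0) _ _ ?_
      intro k
      simp only [Equiv.coe_mulRight]
      have hsm : (k : G) • (k0 : G) • z = ((k * k0 : H) : G) • z := by
        rw [Subgroup.coe_mul, mul_smul]
      rw [hsm]
      have hcoef : (χ k0 : ℂ) * ((χ (k * k0)⁻¹ : ℂˣ) : ℂ) = ((χ k⁻¹ : ℂˣ) : ℂ) := by
        rw [← Units.val_mul, ← map_mul]
        congr 2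
        group
      rw [← hcoef]; ring
    have hFeig : ∀ χ : H →* ℂˣ, A.mulVec (F χ) = lam • F χ := by
      intro χ
      have hinner : ∀ (k : H) (z : X), ∑ t, A z t * w ((k : G) • t) = lam * w ((k : G) • z) := by
        intro k z
        have h1 := lemE w (k : G) z
        rw [hw] at h1
        exact h1
      funext z
      calc A.mulVec (F χ) z = ∑ t, A z t * ∑ k : H, ((χ k⁻¹ : ℂˣ) : ℂ) * w ((k : G) • t) := rfl
        _ = ∑ t, ∑ k : H, ((χ k⁻¹ : ℂˣ) : ℂ) * (A z t * w ((k : G) • t)) := by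
            refine Finset.sum_congr rfl fun t _ => ?_
            rw [Finset.mul_sum]
            exact Finset.sum_congr rfl fun k _ => by ring
        _ = ∑ k : H, ∑ t, ((χ k⁻¹ : ℂˣ) : ℂ) * (A z t * w ((k : G) • t)) := Finset.sum_comm
        _ = ∑ k : H, ((χ k⁻¹ : ℂˣ) : ℂ) * (lam * w ((k : G) • z)) := by
            refine Finset.sum_congr rfl fun k _ => ?_
            rw [← Finset.mul_sum, hinner k z]
        _ = lam * F χ z := by
            rw [hF, Finset.mul_sum]
            exact Finset.sum_congr rfl fun k _ => by ring
    have key2 : ∀ χ : H →* ℂˣ, F χ ((h : G) • y) = F χ y := by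
      intro χ
      by_cases hc0 : (fun j => F χ (x j)) = (0 : Fin m → ℂ)
      · have hz : ∀ z, F χ z = 0 := by
          intro z
          have h0 : F χ (x (dec z).1) = 0 := by simpa using congrFun hc0 (dec z).1
          rw [lemG χ (F χ) (hFequi χ) z, h0, mul_zero]
        rw [hz, hz]
      · have hMceq : (mcMat H S χ).mulVec (fun j => F χ (x j))
            = lam • (fun j => F χ (x j)) := by
          funext i
          rw [← lemF χ (F χ) (hFequi χ) i, hFeig χ]
          rfl
        have hdet : (mcMat H S χ - lam • (1 : Matrix (Fin m) (Fin m) ℂ)).det = 0 := by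
          rw [← Matrix.exists_mulVec_eq_zero_iff]
          refine ⟨_, hc0, ?_⟩
          rw [Matrix.sub_mulVec, Matrix.smul_mulVec, Matrix.one_mulVec, hMceq, sub_self]
        have hone : χ h = 1 := hcl χ (Subgroup.subset_closure ((hKiff χ).mpr hdet))
        rw [hFequi χ h y, hone]
        simp
    have hcard : (Fintype.card (H →* ℂˣ) : ℂ) ≠ 0 := by
      exact_mod_cast Fintype.card_ne_zero (α := H →* ℂˣ)
    refine mul_left_cancel₀ hcard ?_
    rw [← sumF, ← sumF]
    exact Finset.sum_congr rfl fun χ _ => key2 χ
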